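/- For every z in the complex plane, the integral over ℂ of log|z−ζ|² against the measure (1/π)(1+|ζ|²)^{-2} dA(ζ) equals log(1+|z|²); that is, (1/π)∫_ℂ log|z−ζ|²/(1+|ζ|²)² dA(ζ) = log(1+|z|²). -/

import Mathlib

open MeasureTheory Real Set Filter Topology intervalIntegral

/-- Compatibility: the complex absolute value as an `AbsoluteValue`. -/
noncomputable def Complex.abs : AbsoluteValue ℂ ℝ where
  toFun := fun z => ‖z‖
  map_mul' := norm_mul
  nonneg' := norm_nonneg
  eq_zero' := fun _ => norm_eq_zero
  add_le' := norm_add_le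

@[simp] lemma Complex.abs_apply (z : ℂ) : Complex.abs z = ‖z‖ := rfl
lemma Complex.norm_eq_abs (z : ℂ) : ‖z‖ = Complex.abs z := rfl
lemma Complex.abs_ofReal (r : ℝ) : Complex.abs r = |r| := Complex.norm_real r
lemma Complex.abs_conj (z : ℂ) : Complex.abs ((starRingEnd ℂ) z) = Complex.abs z :=
  Complex.norm_conj z
lemma Complex.continuous_abs : Continuous Complex.abs := continuous_norm
lemma Complex.abs_exp_ofReal_mul_I (x : ℝ) : Complex.abs (Complex.exp (x * Complex.I)) = 1 :=
  Complex.norm_exp_ofReal_mul_I x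
lemma Complex.abs_re_le_abs (z : ℂ) : |z.re| ≤ Complex.abs z := Complex.abs_re_le_norm z
lemma Complex.polarCoord_symm_abs (p : ℝ × ℝ) : Complex.abs (Complex.polarCoord.symm p) = |p.1| :=
  Complex.norm_polarCoord_symm p


/-- Mean value property from Cauchy's formula. -/
lemma meanvalue {f : ℂ → ℂ} (h : DiffContOnCl ℂ f (Metric.ball 0 1)) :
    (∫ θ in (0:ℝ)..(2*π), f (circleMap 0 1 θ)) = (2*π : ℝ) * f 0 := by
  have h0 : (0:ℂ) ∈ Metric.ball (0:ℂ) 1 := by simp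
  have := h.circleIntegral_sub_inv_smul h0
  rw [circleIntegral] at this
  simp only [sub_zero, deriv_circleMap] at this
  have heq : ∀ θ : ℝ, (circleMap 0 1 θ * Complex.I) • (circleMap 0 1 θ)⁻¹ • f (circleMap 0 1 θ)
      = Complex.I * f (circleMap 0 1 θ) := by
    intro θ
    have hne : circleMap 0 1 θ ≠ 0 := circleMap_ne_center one_ne_zero
    field_simp [smul_eq_mul]
    simp only [smul_eq_mul]
    rw [mul_comm (circleMap 0 1 θ) Complex.I, mul_assoc, ← mul_assoc (circleMap 0 1 θ),
      mul_one_div_cancel hne, one_mul]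
  simp only [heq] at this
  have : Complex.I * ∫ θ in (0:ℝ)..(2*π), f (circleMap 0 1 θ) = (2 * π * Complex.I) • f 0 := by
    rw [← this, ← intervalIntegral.integral_const_mul]
  have h2 := congrArg (fun w => Complex.I⁻¹ * w) this
  simp only [smul_eq_mul] at h2 ⊢
  rw [← mul_assoc, inv_mul_cancel₀ Complex.I_ne_zero, one_mul] at h2
  rw [h2]
  push_cast
  rw [mul_comm (2 * (π:ℂ)) Complex.I, mul_assoc, ← mul_assoc Complex.I⁻¹,
    inv_mul_cancel₀ Complex.I_ne_zero, one_mul]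

lemma log_avg_zero {a : ℂ} (ha : Complex.abs a < 1) :
    (∫ θ in (0:ℝ)..(2*π), Real.log (Complex.abs (1 - a * Complex.exp (θ * Complex.I)))) = 0 := by
  set f : ℂ → ℂ := fun w => Complex.log (1 - a * w) with hf
  have hdiff : ∀ w : ℂ, Complex.abs w ≤ 1 → DifferentiableAt ℂ f w := by
    intro w hw
    have habs : Complex.abs (a * w) < 1 := by
      rw [map_mul]
      calc Complex.abs a * Complex.abs w ≤ Complex.abs a * 1 :=
        mul_le_mul_of_nonneg_left hw (Complex.abs.nonneg a)
      _ < 1 := by simpa using ha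
    have hmem : (1 - a * w) ∈ Complex.slitPlane := by
      left
      have := Complex.abs_re_le_abs (a * w)
      simp only [Complex.sub_re, Complex.one_re]
      have : (a*w).re < 1 := lt_of_le_of_lt (le_trans (le_abs_self _) this) habs
      linarith
    exact (Complex.differentiableAt_log hmem).comp w
      ((differentiableAt_const 1).sub ((differentiableAt_const a).mul differentiableAt_id))
  have hdc : DiffContOnCl ℂ f (Metric.ball 0 1) := by
    refine ⟨fun w hw => (hdiff w (le_of_lt (by simpa using hw))).differentiableWithinAt, ?_⟩
    rw [closure_ball (0:ℂ) one_ne_zero]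
    exact fun w hw => (hdiff w (by simpa using hw)).continuousAt.continuousWithinAt
  have hmv := meanvalue hdc
  have hf0 : f 0 = 0 := by simp [hf]
  rw [hf0, mul_zero] at hmv
  have hcont : Continuous fun θ : ℝ => f (circleMap 0 1 θ) := by
    rw [continuous_iff_continuousAt]
    exact fun θ => ((hdiff _ (by simp)).continuousAt).comp (continuous_circleMap 0 1).continuousAt
  have hkey : (∫ θ in (0:ℝ)..(2*π), Complex.reCLM (f (circleMap 0 1 θ))) =
      Complex.reCLM (∫ θ in (0:ℝ)..(2*π), f (circleMap 0 1 θ)) :=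
    Complex.reCLM.intervalIntegral_comp_comm (hcont.intervalIntegrable 0 (2*π))
  rw [hmv] at hkey
  simp only [Complex.reCLM_apply, map_zero] at hkey
  calc (∫ θ in (0:ℝ)..(2*π), Real.log (Complex.abs (1 - a * Complex.exp (θ * Complex.I))))
      = ∫ θ in (0:ℝ)..(2*π), (f (circleMap 0 1 θ)).re := by
        apply intervalIntegral.integral_congr
        intro θ _
        simp only [hf, Complex.log_re, circleMap_zero]
        norm_num
    _ = 0 := hkey

lemma one_sub_pos_aux {a : ℂ} (ha : Complex.abs a < 1) (θ : ℝ) :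
    0 < Complex.abs (1 - a * Complex.exp (θ * Complex.I)) := by
  have h1 : Complex.abs (a * Complex.exp (θ * Complex.I)) < 1 := by
    rw [map_mul, Complex.abs_exp_ofReal_mul_I, mul_one]; exact ha
  have h2 := norm_sub_norm_le (1:ℂ) (a * Complex.exp (θ * Complex.I))
  rw [norm_one, Complex.norm_eq_abs, Complex.norm_eq_abs] at h2
  linarith

lemma log_one_sub_cont {a : ℂ} (ha : Complex.abs a < 1) :
    Continuous fun θ : ℝ => Real.log (Complex.abs (1 - a * Complex.exp (θ * Complex.I))) := by
  apply Continuous.log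
  · exact Complex.continuous_abs.comp (by continuity)
  · exact fun θ => (one_sub_pos_aux ha θ).ne'

lemma avg_const_add {a : ℂ} (ha : Complex.abs a < 1) (c : ℝ) :
    (∫ θ in (0:ℝ)..(2*π), (c + Real.log (Complex.abs (1 - a * Complex.exp (θ * Complex.I)))))
      = 2*π * c := by
  rw [intervalIntegral.integral_add (intervalIntegrable_const)
    ((log_one_sub_cont ha).intervalIntegrable 0 (2*π)), log_avg_zero ha]
  simp [mul_comm]

lemma circle_avg_log (z : ℂ) {r : ℝ} (hr : 0 < r) (hne : Complex.abs z ≠ r) :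
    (∫ θ in (0:ℝ)..(2*π), Real.log (Complex.abs (z - r * Complex.exp (θ * Complex.I))))
      = 2*π * Real.log (max (Complex.abs z) r) := by
  rcases lt_or_gt_of_ne hne with hlt | hgt
  · -- |z| < r
    have hr0 : (r:ℂ) ≠ 0 := Complex.ofReal_ne_zero.mpr hr.ne'
    set a : ℂ := (starRingEnd ℂ) z / r with hadef
    have ha : Complex.abs a < 1 := by
      rw [hadef, map_div₀, Complex.abs_conj, Complex.abs_ofReal, abs_of_pos hr]
      exact (div_lt_one hr).mpr hlt
    have habs : ∀ θ : ℝ, Complex.abs (z - r * Complex.exp (θ * Complex.I))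
        = r * Complex.abs (1 - a * Complex.exp (θ * Complex.I)) := by
      intro θ
      have hEne : Complex.exp ((θ:ℂ) * Complex.I) ≠ 0 := Complex.exp_ne_zero _
      have hconjE : (starRingEnd ℂ) (Complex.exp ((θ:ℂ) * Complex.I))
          = (Complex.exp ((θ:ℂ) * Complex.I))⁻¹ := by
        rw [← Complex.exp_conj, ← Complex.exp_neg]
        congr 1
        simp only [map_mul, Complex.conj_ofReal, Complex.conj_I]
        ring
      have key : (starRingEnd ℂ) (z - r * Complex.exp ((θ:ℂ) * Complex.I))
          = -(Complex.exp ((θ:ℂ) * Complex.I))⁻¹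
            * ((r:ℂ) * (1 - a * Complex.exp ((θ:ℂ) * Complex.I))) := by
        rw [map_sub, map_mul, hconjE, hadef, Complex.conj_ofReal]
        field_simp
        ring
      have h2 := congrArg Complex.abs key
      rw [Complex.abs_conj] at h2
      rw [h2, map_mul, map_mul, map_neg_eq_map, map_inv₀, Complex.abs_exp_ofReal_mul_I, inv_one,
        one_mul, Complex.abs_ofReal, abs_of_pos hr]
    rw [max_eq_right hlt.le]
    calc (∫ θ in (0:ℝ)..(2*π), Real.log (Complex.abs (z - r * Complex.exp (θ * Complex.I))))
        = ∫ θ in (0:ℝ)..(2*π), (Real.log r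
            + Real.log (Complex.abs (1 - a * Complex.exp (θ * Complex.I)))) := by
          apply intervalIntegral.integral_congr
          intro θ _
          dsimp only
          rw [habs θ, Real.log_mul hr.ne' (one_sub_pos_aux ha θ).ne']
      _ = 2*π * Real.log r := avg_const_add ha _
  · -- r < |z|
    have hz0 : (0:ℝ) < Complex.abs z := hr.trans hgt
    have hz0' : z ≠ 0 := by
      intro h; rw [h] at hz0; simp at hz0
    set a : ℂ := (r:ℂ) / z with hadef
    have ha : Complex.abs a < 1 := by
      rw [hadef, map_div₀, Complex.abs_ofReal, abs_of_pos hr]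
      exact (div_lt_one hz0).mpr hgt
    have habs : ∀ θ : ℝ, Complex.abs (z - r * Complex.exp (θ * Complex.I))
        = Complex.abs z * Complex.abs (1 - a * Complex.exp (θ * Complex.I)) := by
      intro θ
      rw [← map_mul]
      congr 1
      rw [hadef]
      field_simp
    rw [max_eq_left hgt.le]
    calc (∫ θ in (0:ℝ)..(2*π), Real.log (Complex.abs (z - r * Complex.exp (θ * Complex.I))))
        = ∫ θ in (0:ℝ)..(2*π), (Real.log (Complex.abs z)
            + Real.log (Complex.abs (1 - a * Complex.exp (θ * Complex.I)))) := by
          apply intervalIntegral.integral_congr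
          intro θ _
          dsimp only
          rw [habs θ, Real.log_mul hz0.ne' (one_sub_pos_aux ha θ).ne']
      _ = 2*π * Real.log (Complex.abs z) := avg_const_add ha _


noncomputable def Hfun : ℝ → ℝ :=
  fun s => -(Real.log s / (2*(1+s^2))) + (1/2) * Real.log s - (1/4) * Real.log (1+s^2)

lemma denom_pos (s : ℝ) : (0:ℝ) < 1 + s^2 := by positivity

lemma derivH {r : ℝ} (hr : 0 < r) :
    HasDerivAt Hfun (r * Real.log r / (1+r^2)^2) r := by
  have hd : (0:ℝ) < 1 + r^2 := denom_pos r
  have hq : HasDerivAt (fun s : ℝ => 1 + s^2) (2*r) r := by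
    simpa using (hasDerivAt_pow 2 r).const_add 1
  have hq2 : HasDerivAt (fun s : ℝ => 2*(1+s^2)) (2*(2*r)) r := hq.const_mul 2
  have hlog : HasDerivAt Real.log r⁻¹ r := Real.hasDerivAt_log hr.ne'
  have t1 : HasDerivAt (fun s : ℝ => Real.log s / (2*(1+s^2)))
      ((r⁻¹ * (2*(1+r^2)) - Real.log r * (2*(2*r))) / (2*(1+r^2))^2) r :=
    hlog.div hq2 (by positivity)
  have t3 : HasDerivAt (fun s : ℝ => Real.log (1+s^2)) (2*r / (1+r^2)) r := by
    simpa using hq.log hd.ne'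
  have := ((t1.neg).add (hlog.const_mul (1/2))).sub (t3.const_mul (1/4))
  exact this.congr_deriv (by field_simp; ring)

lemma tendstoH : Tendsto Hfun atTop (𝓝 0) := by
  have h1 : Tendsto (fun s : ℝ => Real.log s / (2*(1+s^2))) atTop (𝓝 0) := by
    have hg : Tendsto (fun s : ℝ => Real.log s / (1*s+0)) atTop (𝓝 0) := by
      simpa using tendsto_pow_log_div_mul_add_atTop 1 0 1 one_ne_zero
    apply tendsto_of_tendsto_of_tendsto_of_le_of_le' tendsto_const_nhds hg
    · filter_upwards [eventually_ge_atTop (1:ℝ)] with s hs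
      exact div_nonneg (Real.log_nonneg hs) (by positivity)
    · filter_upwards [eventually_ge_atTop (1:ℝ)] with s hs
      rw [one_mul, add_zero]
      apply div_le_div_of_nonneg_left (Real.log_nonneg hs) (by positivity)
      nlinarith
  have h2 : Tendsto (fun s : ℝ => (1/4) * Real.log (s^2/(1+s^2))) atTop (𝓝 0) := by
    have hr : Tendsto (fun s : ℝ => s^2/(1+s^2)) atTop (𝓝 1) := by
      have : Tendsto (fun s : ℝ => 1 - (1+s^2)⁻¹) atTop (𝓝 (1 - 0)) := by
        apply Tendsto.const_sub
        apply Tendsto.inv_tendsto_atTop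
        exact tendsto_atTop_add_const_left _ 1 (tendsto_pow_atTop two_ne_zero)
      rw [sub_zero] at this
      apply this.congr'
      filter_upwards [eventually_ge_atTop (1:ℝ)] with s hs
      field_simp
      ring
    have hcont : Tendsto (fun x : ℝ => Real.log x) (𝓝 1) (𝓝 0) := by
      simpa using (Real.continuousAt_log one_ne_zero).tendsto
    simpa using ((hcont.comp hr).const_mul (1/4:ℝ))
  have : Tendsto (fun s : ℝ => -(Real.log s / (2*(1+s^2))) + (1/4) * Real.log (s^2/(1+s^2)))
      atTop (𝓝 0) := by simpa using (h1.neg).add h2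
  apply this.congr'
  filter_upwards [eventually_ge_atTop (1:ℝ)] with s hs
  have hs0 : (0:ℝ) < s := by linarith
  rw [Hfun]
  rw [Real.log_div (by positivity) (by positivity), Real.log_pow]
  push_cast
  ring

lemma abs_log_le_rpow {r : ℝ} (h1 : 0 < r) (h2 : r ≤ 1) :
    |Real.log r| ≤ 2 * r ^ (-(1/2) : ℝ) := by
  rw [abs_of_nonpos (Real.log_nonpos h1.le h2)]
  have h3 : Real.log (r ^ (-(1/2):ℝ)) ≤ r ^ (-(1/2):ℝ) - 1 :=
    Real.log_le_sub_one_of_pos (by positivity)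
  rw [Real.log_rpow h1] at h3
  linarith

lemma intOn_rpow_Ioc : IntegrableOn (fun r : ℝ => r ^ (-(1/2):ℝ)) (Ioc 0 1) := by
  have h : IntervalIntegrable (fun x : ℝ => x ^ (-(1/2):ℝ)) volume 0 1 :=
    intervalIntegral.intervalIntegrable_rpow' (by norm_num)
  rwa [intervalIntegrable_iff_integrableOn_Ioc_of_le zero_le_one] at h

lemma integrable_D (C₁ C₂ : ℝ) (h1 : 0 ≤ C₁) (h2 : 0 ≤ C₂) :
    IntegrableOn (fun r => r/(1+r^2)^2 * (C₁ + C₂*r + C₂*|Real.log r|)) (Ioi (0:ℝ)) := by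
  have hmeas : ∀ s : Set ℝ, MeasurableSet s → AEStronglyMeasurable
      (fun r => r/(1+r^2)^2 * (C₁ + C₂*r + C₂*|Real.log r|)) (volume.restrict s) := by
    intro s _
    apply Measurable.aestronglyMeasurable
    apply Measurable.mul
    · exact (measurable_id.div ((measurable_id.pow_const 2).const_add 1 |>.pow_const 2))
    · exact ((measurable_const.add (measurable_const.mul measurable_id)).add
        (measurable_const.mul (Real.measurable_log.abs)))
  rw [← Ioc_union_Ioi_eq_Ioi (zero_le_one (α := ℝ)), integrableOn_union]
  constructor
  · apply Integrable.mono' (g := fun r => (C₁ + C₂) + C₂ * (2 * r ^ (-(1/2):ℝ)))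
    · exact (integrableOn_const measure_Ioc_lt_top.ne).add
        ((intOn_rpow_Ioc.const_mul 2).const_mul C₂)
    · exact hmeas _ measurableSet_Ioc
    · rw [ae_restrict_iff' measurableSet_Ioc]
      apply ae_of_all
      intro r hr
      obtain ⟨hr0, hr1⟩ := hr
      have hu1 : r/(1+r^2)^2 ≤ 1 := by
        rw [div_le_one (by positivity)]
        nlinarith
      have hS0 : 0 ≤ C₁ + C₂*r + C₂*|Real.log r| := by positivity
      rw [Real.norm_eq_abs, abs_of_nonneg (by positivity)]
      calc r/(1+r^2)^2 * (C₁ + C₂*r + C₂*|Real.log r|) ≤ 1 * (C₁ + C₂*r + C₂*|Real.log r|) :=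
            mul_le_mul_of_nonneg_right hu1 hS0
        _ ≤ (C₁ + C₂) + C₂ * (2 * r ^ (-(1/2):ℝ)) := by
            have := abs_log_le_rpow hr0 hr1
            nlinarith
  · apply Integrable.mono' (g := fun r => (C₁ + 2*C₂) * r ^ (-2:ℝ))
    · exact (integrableOn_Ioi_rpow_of_lt (by norm_num) one_pos).const_mul _
    · exact hmeas _ measurableSet_Ioi
    · rw [ae_restrict_iff' measurableSet_Ioi]
      apply ae_of_all
      intro r hr
      rw [mem_Ioi] at hr
      have hr0 : (0:ℝ) < r := lt_trans one_pos hr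
      have hlog : |Real.log r| ≤ r := by
        rw [abs_of_nonneg (Real.log_nonneg hr.le)]
        linarith [Real.log_le_sub_one_of_pos hr0]
      rw [Real.norm_eq_abs, abs_of_nonneg (by positivity),
        show (-2:ℝ) = -((2:ℕ):ℝ) by norm_num, Real.rpow_neg hr0.le, Real.rpow_natCast]
      rw [div_mul_eq_mul_div, div_le_iff₀ (by positivity), mul_comm ((C₁+2*C₂)) _, inv_mul_eq_div,
        div_mul_eq_mul_div, le_div_iff₀ (by positivity)]
      have h34 : r^3 ≤ (1+r^2)^2 := by nlinarith
      have h45 : r^4 ≤ (1+r^2)^2 := by nlinarith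
      have e1 : C₁ * r^3 ≤ C₁ * (1+r^2)^2 := mul_le_mul_of_nonneg_left h34 h1
      have e2 : C₂ * r^4 ≤ C₂ * (1+r^2)^2 := mul_le_mul_of_nonneg_left h45 h2
      have e3 : C₂ * (r^3 * |Real.log r|) ≤ C₂ * (1+r^2)^2 := by
        have : r^3 * |Real.log r| ≤ r^3 * r := mul_le_mul_of_nonneg_left hlog (by positivity)
        nlinarith
      nlinarith

lemma intOn_rlog : IntegrableOn (fun r => r * Real.log r/(1+r^2)^2) (Ioi (0:ℝ)) := by
  apply Integrable.mono' (integrable_D 0 1 le_rfl zero_le_one)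
  · apply Measurable.aestronglyMeasurable
    exact (measurable_id.mul Real.measurable_log).div
      ((measurable_id.pow_const 2).const_add 1 |>.pow_const 2)
  · rw [ae_restrict_iff' measurableSet_Ioi]
    apply ae_of_all
    intro r hr
    rw [mem_Ioi] at hr
    rw [Real.norm_eq_abs, abs_div, abs_of_nonneg (by positivity : (0:ℝ) ≤ (1+r^2)^2), abs_mul,
      abs_of_pos hr]
    rw [div_le_iff₀ (by positivity), zero_add]
    have : r/(1+r^2)^2 * (1*r + 1*|Real.log r|) * (1+r^2)^2
        = r * (r + |Real.log r|) := by field_simp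
    rw [this]
    nlinarith [abs_nonneg (Real.log r), hr.le]

lemma int_Ioi_rlog {R : ℝ} (hR : 0 < R) :
    ∫ r in Ioi R, r * Real.log r/(1+r^2)^2 = -(Hfun R) := by
  have h := integral_Ioi_of_hasDerivAt_of_tendsto
    (f := Hfun) (f' := fun r => r * Real.log r/(1+r^2)^2) (a := R) (m := 0)
    (derivH hR).continuousAt.continuousWithinAt
    (fun x hx => derivH (hR.trans hx))
    (intOn_rlog.mono_set (Ioi_subset_Ioi hR.le))
    tendstoH
  rw [h, zero_sub]

lemma tendstoH0 : Tendsto Hfun (𝓝[>] (0:ℝ)) (𝓝 0) := by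
  have ha : Tendsto (fun s : ℝ => Real.log s * s ^ (2:ℝ) * (2*(1+s^2))⁻¹) (𝓝[>] (0:ℝ)) (𝓝 0) := by
    have h1 := tendsto_log_mul_rpow_nhdsGT_zero (r := 2) two_pos
    have h2 : Tendsto (fun s : ℝ => (2*(1+s^2))⁻¹) (𝓝[>] (0:ℝ)) (𝓝 ((2*(1+0^2))⁻¹)) := by
      apply ContinuousAt.tendsto ?_ |>.mono_left nhdsWithin_le_nhds
      have : ((2:ℝ)*(1+(0:ℝ)^2)) ≠ 0 := by norm_num
      fun_prop (disch := norm_num)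
    have h12 := h1.mul h2
    rw [show (0:ℝ) * (2*(1+(0:ℝ)^2))⁻¹ = 0 by norm_num] at h12
    exact h12
  have hb : Tendsto (fun s : ℝ => (1/4) * Real.log (1+s^2)) (𝓝[>] (0:ℝ)) (𝓝 ((1/4) * Real.log (1+0^2))) := by
    apply ContinuousAt.tendsto ?_ |>.mono_left nhdsWithin_le_nhds
    have : (1:ℝ)+(0:ℝ)^2 ≠ 0 := by norm_num
    fun_prop (disch := norm_num)
  have hcomb := ha.sub hb
  rw [show (0:ℝ) - (1/4) * Real.log (1+(0:ℝ)^2) = 0 by norm_num] at hcomb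
  apply hcomb.congr'
  filter_upwards [self_mem_nhdsWithin] with s hs
  rw [mem_Ioi] at hs
  rw [Hfun, Real.rpow_two]
  field_simp
  ring

lemma int_Ioi0_rlog : ∫ r in Ioi (0:ℝ), r * Real.log r/(1+r^2)^2 = 0 := by
  have hmono : Monotone (fun n : ℕ => Ioi (((n:ℝ)+1)⁻¹)) := by
    intro m n hmn
    apply Ioi_subset_Ioi
    apply inv_anti₀ (by positivity)
    exact add_le_add_left (Nat.cast_le.mpr hmn) 1
  have hunion : (⋃ n : ℕ, Ioi (((n:ℝ)+1)⁻¹)) = Ioi (0:ℝ) := by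
    ext x
    simp only [mem_iUnion, mem_Ioi]
    constructor
    · rintro ⟨n, hn⟩
      exact lt_trans (by positivity) hn
    · intro hx
      obtain ⟨n, hn⟩ := exists_nat_gt x⁻¹
      refine ⟨n, ?_⟩
      have hn1 : x⁻¹ < (n:ℝ)+1 := by
        calc x⁻¹ < n := hn
          _ < (n:ℝ)+1 := by linarith
      have h2 := one_div_lt_one_div_of_lt (by positivity : (0:ℝ) < x⁻¹) hn1
      rwa [one_div, one_div, inv_inv] at h2
  have hkey := tendsto_setIntegral_of_monotone (f := fun r => r * Real.log r/(1+r^2)^2)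
    (μ := volume) (fun n : ℕ => measurableSet_Ioi) hmono (by rw [hunion]; exact intOn_rlog)
  rw [hunion] at hkey
  have hseq : Tendsto (fun n : ℕ => ((n:ℝ)+1)⁻¹) atTop (𝓝[>] (0:ℝ)) := by
    rw [tendsto_nhdsWithin_iff]
    constructor
    · exact tendsto_one_div_add_atTop_nhds_zero_nat.congr (fun n => by rw [one_div])
    · exact Eventually.of_forall (fun n => mem_Ioi.mpr (by positivity))
  have hval : Tendsto (fun n : ℕ => ∫ r in Ioi (((n:ℝ)+1)⁻¹), r * Real.log r/(1+r^2)^2)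
      atTop (𝓝 0) := by
    have : Tendsto (fun n : ℕ => -(Hfun (((n:ℝ)+1)⁻¹))) atTop (𝓝 (-0)) :=
      (tendstoH0.comp hseq).neg
    rw [neg_zero] at this
    apply this.congr
    intro n
    rw [int_Ioi_rlog (by positivity)]
  exact tendsto_nhds_unique hkey hval

lemma int_Ioc_rfrac {R : ℝ} (hR : 0 ≤ R) :
    ∫ r in Ioc (0:ℝ) R, r/(1+r^2)^2 = R^2/(2*(1+R^2)) := by
  rw [← intervalIntegral.integral_of_le hR]
  have hderiv : ∀ x ∈ uIcc (0:ℝ) R, HasDerivAt (fun x : ℝ => -(1/2) * (1+x^2)⁻¹)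
      (x/(1+x^2)^2) x := by
    intro x _
    have hq : HasDerivAt (fun s : ℝ => 1 + s^2) (2*x) x := by
      simpa using (hasDerivAt_pow 2 x).const_add 1
    have := (hq.inv (by positivity)).const_mul (-(1/2):ℝ)
    exact this.congr_deriv (by field_simp)
  have hcont : Continuous (fun x : ℝ => x/(1+x^2)^2) := by
    apply Continuous.div continuous_id (by continuity)
    intro x; positivity
  rw [intervalIntegral.integral_eq_sub_of_hasDerivAt hderiv (hcont.intervalIntegrable 0 R)]
  norm_num
  field_simp
  ring

lemma radial_total (R : ℝ) (hR : 0 ≤ R) :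
    ∫ r in Ioi (0:ℝ), r * Real.log (max R r) / (1+r^2)^2 = (1/4) * Real.log (1+R^2) := by
  rcases eq_or_lt_of_le hR with hR0 | hRpos
  · subst hR0
    calc ∫ r in Ioi (0:ℝ), r * Real.log (max 0 r) / (1+r^2)^2
        = ∫ r in Ioi (0:ℝ), r * Real.log r/(1+r^2)^2 := by
          apply setIntegral_congr_fun measurableSet_Ioi
          intro r hr
          rw [mem_Ioi] at hr
          dsimp only
          rw [max_eq_right hr.le]
      _ = 0 := int_Ioi0_rlog
      _ = (1/4) * Real.log (1+(0:ℝ)^2) := by norm_num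
  · have hsplit : Ioi (0:ℝ) = Ioc 0 R ∪ Ioi R := (Ioc_union_Ioi_eq_Ioi hR).symm
    have hint1 : IntegrableOn (fun r => r * Real.log (max R r) / (1+r^2)^2) (Ioc 0 R) := by
      have hc : ContinuousOn (fun r : ℝ => r * Real.log (max R r) / (1+r^2)^2) (Icc 0 R) := by
        apply ContinuousOn.div
        · apply ContinuousOn.mul continuousOn_id
          apply ContinuousOn.log ((continuous_const.max continuous_id).continuousOn)
          intro x _
          exact (lt_max_of_lt_left hRpos).ne'
        · fun_prop
        · intro x _; positivity
      exact (hc.integrableOn_compact isCompact_Icc).mono_set Ioc_subset_Icc_self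
    have hint2 : IntegrableOn (fun r => r * Real.log (max R r) / (1+r^2)^2) (Ioi R) := by
      apply (intOn_rlog.mono_set (Ioi_subset_Ioi hR)).congr_fun ?_ measurableSet_Ioi
      intro x hx
      rw [mem_Ioi] at hx
      dsimp only
      rw [max_eq_right hx.le]
    rw [hsplit, setIntegral_union (Ioc_disjoint_Ioi le_rfl) measurableSet_Ioi hint1 hint2]
    have hv1 : ∫ r in Ioc (0:ℝ) R, r * Real.log (max R r) / (1+r^2)^2
        = Real.log R * (R^2/(2*(1+R^2))) := by
      rw [← int_Ioc_rfrac hR, ← MeasureTheory.integral_const_mul]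
      apply setIntegral_congr_fun measurableSet_Ioc
      intro x hx
      dsimp only
      rw [max_eq_left hx.2]
      ring
    have hv2 : ∫ r in Ioi R, r * Real.log (max R r) / (1+r^2)^2 = -(Hfun R) := by
      rw [← int_Ioi_rlog hRpos]
      apply setIntegral_congr_fun measurableSet_Ioi
      intro x hx
      rw [mem_Ioi] at hx
      dsimp only
      rw [max_eq_right hx.le]
    rw [hv1, hv2, Hfun]
    have h1R : (0:ℝ) < 1 + R^2 := by positivity
    field_simp
    ring

lemma log_one_add_le {c : ℝ} (hc : 0 ≤ c) : Real.log (1+c) ≤ c := by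
  have := Real.log_le_sub_one_of_pos (by linarith : (0:ℝ) < 1+c)
  linarith

lemma log_sum_le (a r : ℝ) (ha : 0 ≤ a) (hr : 0 ≤ r) :
    Real.log (1+a+r) ≤ Real.log (1+a) + r := by
  calc Real.log (1+a+r) ≤ Real.log ((1+a)*(1+r)) := by
        apply Real.log_le_log (by linarith)
        nlinarith
    _ = Real.log (1+a) + Real.log (1+r) := Real.log_mul (by linarith) (by linarith)
    _ ≤ Real.log (1+a) + r := by linarith [log_one_add_le hr]

lemma logmax_bound (a : ℝ) {r : ℝ} (ha : 0 ≤ a) (hr : 0 < r) :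
    |Real.log (max a r)| ≤ Real.log (1+a) + |Real.log r| + r := by
  have hl1 : (0:ℝ) ≤ Real.log (1+a) := Real.log_nonneg (by linarith)
  rcases le_or_gt 1 a with h1 | h1
  · rw [abs_of_nonneg (Real.log_nonneg (le_max_of_le_left h1))]
    have hb : Real.log (max a r) ≤ Real.log (1+a) + r := by
      calc Real.log (max a r) ≤ Real.log (1+a+r) := by
            apply Real.log_le_log (lt_of_lt_of_le one_pos (le_max_of_le_left h1))
            apply max_le (by linarith) (by linarith)
        _ ≤ Real.log (1+a) + r := log_sum_le a r ha hr.le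
    linarith [abs_nonneg (Real.log r)]
  · rcases le_or_gt r 1 with h2 | h2
    · have hm1 : max a r ≤ 1 := max_le h1.le h2
      have hmp : 0 < max a r := lt_max_of_lt_right hr
      rw [abs_of_nonpos (Real.log_nonpos hmp.le hm1)]
      have h3 : Real.log r ≤ Real.log (max a r) := Real.log_le_log hr (le_max_right _ _)
      linarith [neg_le_abs (Real.log r)]
    · rw [max_eq_right (by linarith : a ≤ r),
        abs_of_nonneg (Real.log_nonneg h2.le)]
      linarith [le_abs_self (Real.log r), abs_nonneg (Real.log r)]

section MainAssembly

variable (z : ℂ)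

/-- polar form of the point. -/
noncomputable def pcs (p : ℝ × ℝ) : ℂ := (p.1 : ℂ) * (Real.cos p.2 + Real.sin p.2 * Complex.I)

lemma pcs_eq (p : ℝ × ℝ) : pcs p = (p.1 : ℂ) * Complex.exp (p.2 * Complex.I) := by
  rw [pcs, Complex.exp_mul_I, Complex.ofReal_cos, Complex.ofReal_sin]

lemma pcs_eq_polar (p : ℝ × ℝ) : Complex.polarCoord.symm p = pcs p := by
  rw [Complex.polarCoord_symm_apply, pcs]

lemma continuous_pcs : Continuous pcs := by
  apply Continuous.mul
  · exact Complex.continuous_ofReal.comp continuous_fst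
  · apply Continuous.add
    · exact Complex.continuous_ofReal.comp (Real.continuous_cos.comp continuous_snd)
    · exact (Complex.continuous_ofReal.comp (Real.continuous_sin.comp continuous_snd)).mul
        continuous_const

/-- The integrand in polar coordinates. -/
noncomputable def FF (p : ℝ × ℝ) : ℝ :=
  p.1 * (Real.log (Complex.abs (z - pcs p) ^ 2) / (1 + p.1 ^ 2) ^ 2)

lemma FF_meas : AEStronglyMeasurable (FF z)
    ((volume.restrict (Set.Ioi (0:ℝ))).prod (volume.restrict (Set.Ioo (-π) π))) := by
  apply Measurable.aestronglyMeasurable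
  apply Measurable.mul measurable_fst
  apply Measurable.div
  · apply Measurable.comp Real.measurable_log
    exact ((Complex.continuous_abs.comp
      (continuous_const.sub continuous_pcs)).pow 2).measurable
  · exact ((measurable_fst.pow_const 2).const_add 1).pow_const 2

lemma abs_pos_of_ne {r : ℝ} (hr : 0 < r) (hne : Complex.abs z ≠ r) (θ : ℝ) :
    0 < Complex.abs (z - (r:ℂ) * Complex.exp (θ * Complex.I)) := by
  rw [AbsoluteValue.pos_iff, sub_ne_zero]
  intro h
  apply hne
  rw [h, map_mul, Complex.abs_exp_ofReal_mul_I, mul_one, Complex.abs_ofReal, abs_of_pos hr]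

lemma L_cont {r : ℝ} (hr : 0 < r) (hne : Complex.abs z ≠ r) :
    Continuous (fun θ : ℝ => Real.log (Complex.abs (z - (r:ℂ) * Complex.exp (θ * Complex.I)))) := by
  apply Continuous.log
  · exact Complex.continuous_abs.comp (continuous_const.sub (continuous_const.mul (by continuity)))
  · exact fun θ => (abs_pos_of_ne z hr hne θ).ne'

lemma L_periodic (r : ℝ) : Function.Periodic
    (fun θ : ℝ => Real.log (Complex.abs (z - (r:ℂ) * Complex.exp (θ * Complex.I)))) (2*π) := by
  intro θ
  have : Complex.exp (((θ + 2*π : ℝ) : ℂ) * Complex.I) = Complex.exp ((θ:ℝ) * Complex.I) := by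
    push_cast
    rw [add_mul, Complex.exp_add, Complex.exp_two_pi_mul_I, mul_one]
  simp only [this]

lemma L_integral {r : ℝ} (hr : 0 < r) (hne : Complex.abs z ≠ r) :
    (∫ θ in Set.Ioo (-π) π, Real.log (Complex.abs (z - (r:ℂ) * Complex.exp (θ * Complex.I))))
      = 2*π*Real.log (max (Complex.abs z) r) := by
  rw [← integral_Ioc_eq_integral_Ioo,
    ← intervalIntegral.integral_of_le (by linarith [Real.pi_pos] : -π ≤ π)]
  have h2 := (L_periodic z r).intervalIntegral_add_eq (-π) 0
  rw [show -π + 2*π = π by ring, zero_add] at h2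
  rw [h2]
  exact circle_avg_log z hr hne

lemma FF_rewrite {r : ℝ} (θ : ℝ) :
    FF z (r, θ) = (r/(1+r^2)^2)
      * (2 * Real.log (Complex.abs (z - (r:ℂ) * Complex.exp (θ * Complex.I)))) := by
  rw [FF, pcs_eq]
  dsimp only
  rw [Real.log_pow]
  push_cast
  ring

lemma FF_inner_integral {r : ℝ} (hr : 0 < r) (hne : Complex.abs z ≠ r) :
    (∫ θ in Set.Ioo (-π) π, FF z (r, θ))
      = 4*π * (r * Real.log (max (Complex.abs z) r) / (1+r^2)^2) := by
  simp only [FF_rewrite]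
  rw [MeasureTheory.integral_const_mul, MeasureTheory.integral_const_mul, L_integral z hr hne]
  ring

lemma FF_integrable_slice {r : ℝ} (hr : 0 < r) (hne : Complex.abs z ≠ r) :
    Integrable (fun θ => FF z (r, θ)) (volume.restrict (Set.Ioo (-π) π)) := by
  have heq : (fun θ => FF z (r, θ)) = fun θ : ℝ => (r/(1+r^2)^2)
      * (2 * Real.log (Complex.abs (z - (r:ℂ) * Complex.exp (θ * Complex.I)))) :=
    funext (fun θ => FF_rewrite z θ)
  rw [heq]
  apply Integrable.const_mul
  apply Integrable.const_mul
  exact ((L_cont z hr hne).continuousOn.integrableOn_compact isCompact_Icc).mono_set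
    Set.Ioo_subset_Icc_self

lemma FF_norm_inner_le {r : ℝ} (hr : 0 < r) (hne : Complex.abs z ≠ r) :
    (∫ θ in Set.Ioo (-π) π, ‖FF z (r, θ)‖)
      ≤ r/(1+r^2)^2 * (12*π*Real.log (1+Complex.abs z) + (12*π)*r + (12*π)*|Real.log r|) := by
  set a := Complex.abs z with hadef
  have ha : 0 ≤ a := Complex.abs.nonneg z
  set L := fun θ : ℝ => Real.log (Complex.abs (z - (r:ℂ) * Complex.exp (θ * Complex.I))) with hLdef
  have hLcont : Continuous L := L_cont z hr hne
  have hnorm : ∀ θ : ℝ, ‖FF z (r,θ)‖ = (2*r/(1+r^2)^2) * |L θ| := by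
    intro θ
    rw [FF_rewrite]
    rw [Real.norm_eq_abs, abs_mul, abs_mul, abs_of_pos (by positivity : (0:ℝ) < r/(1+r^2)^2),
      abs_of_pos (by norm_num : (0:ℝ) < 2)]
    ring
  have hintL : IntegrableOn L (Set.Ioo (-π) π) :=
    (hLcont.continuousOn.integrableOn_compact isCompact_Icc).mono_set Set.Ioo_subset_Icc_self
  have hintM : IntegrableOn (fun θ => max (L θ) 0) (Set.Ioo (-π) π) :=
    ((hLcont.max continuous_const).continuousOn.integrableOn_compact isCompact_Icc).mono_set
      Set.Ioo_subset_Icc_self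
  have habsval : ∀ θ : ℝ, |L θ| = 2 * max (L θ) 0 - L θ := by
    intro θ
    rcases le_or_gt 0 (L θ) with h | h
    · rw [abs_of_nonneg h, max_eq_left h]; ring
    · rw [abs_of_neg h, max_eq_right h.le]; ring
  have hsplit : (∫ θ in Set.Ioo (-π) π, |L θ|)
      = 2 * (∫ θ in Set.Ioo (-π) π, max (L θ) 0) - ∫ θ in Set.Ioo (-π) π, L θ := by
    rw [← MeasureTheory.integral_const_mul, ← integral_sub (hintM.const_mul 2) hintL]
    exact setIntegral_congr_fun measurableSet_Ioo (fun θ _ => habsval θ)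
  have hMbound : (∫ θ in Set.Ioo (-π) π, max (L θ) 0) ≤ 2*π * Real.log (1+a+r) := by
    have hc : (0:ℝ) ≤ Real.log (1+a+r) := Real.log_nonneg (by linarith)
    calc (∫ θ in Set.Ioo (-π) π, max (L θ) 0)
        ≤ ∫ _ in Set.Ioo (-π) π, Real.log (1+a+r) := by
          apply setIntegral_mono_on hintM (integrableOn_const measure_Ioo_lt_top.ne)
            measurableSet_Ioo
          intro θ _
          apply max_le ?_ hc
          apply Real.log_le_log (abs_pos_of_ne z hr hne θ)
          calc Complex.abs (z - (r:ℂ) * Complex.exp (θ * Complex.I))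
              ≤ Complex.abs z + Complex.abs ((r:ℂ) * Complex.exp (θ * Complex.I)) := by
                rw [← Complex.norm_eq_abs, ← Complex.norm_eq_abs, ← Complex.norm_eq_abs]
                exact norm_sub_le _ _
            _ = a + r := by
                rw [map_mul, Complex.abs_exp_ofReal_mul_I, mul_one, Complex.abs_ofReal,
                  abs_of_pos hr, hadef]
            _ ≤ 1 + a + r := by linarith
      _ = 2*π * Real.log (1+a+r) := by
          rw [setIntegral_const, measureReal_def, Real.volume_Ioo, smul_eq_mul,
            ENNReal.toReal_ofReal (by linarith [Real.pi_pos] : (0:ℝ) ≤ π - -π)]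
          ring_nf
  have hLval : (∫ θ in Set.Ioo (-π) π, L θ) = 2*π*Real.log (max a r) := L_integral z hr hne
  have hintabs : (∫ θ in Set.Ioo (-π) π, |L θ|)
      ≤ 6*π*Real.log (1+a) + 6*π*r + 2*π*|Real.log r| := by
    rw [hsplit, hLval]
    have hb1 : Real.log (1+a+r) ≤ Real.log (1+a) + r := log_sum_le a r ha hr.le
    have hb2 : -Real.log (max a r) ≤ Real.log (1+a) + |Real.log r| + r := by
      have := logmax_bound a ha hr
      linarith [neg_le_abs (Real.log (max a r))]
    have hpi := Real.pi_pos
    nlinarith [hMbound]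
  calc (∫ θ in Set.Ioo (-π) π, ‖FF z (r, θ)‖)
      = (2*r/(1+r^2)^2) * ∫ θ in Set.Ioo (-π) π, |L θ| := by
        simp only [hnorm]
        rw [MeasureTheory.integral_const_mul]
    _ ≤ (2*r/(1+r^2)^2) * (6*π*Real.log (1+a) + 6*π*r + 2*π*|Real.log r|) :=
        mul_le_mul_of_nonneg_left hintabs (by positivity)
    _ ≤ r/(1+r^2)^2 * (12*π*Real.log (1+a) + (12*π)*r + (12*π)*|Real.log r|) := by
        have hpi := Real.pi_pos
        have h1 : (0:ℝ) ≤ r/(1+r^2)^2 := by positivity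
        have h2 : 2*π*|Real.log r| ≤ 6*π*|Real.log r| := by
          nlinarith [abs_nonneg (Real.log r)]
        have : (2*r/(1+r^2)^2) * (6*π*Real.log (1+a) + 6*π*r + 2*π*|Real.log r|)
            = r/(1+r^2)^2 * (12*π*Real.log (1+a) + (12*π)*r + (4*π)*|Real.log r|) := by
          ring
        rw [this]
        apply mul_le_mul_of_nonneg_left ?_ h1
        nlinarith [abs_nonneg (Real.log r)]

lemma FF_prod_integrable : Integrable (FF z)
    ((volume.restrict (Set.Ioi (0:ℝ))).prod (volume.restrict (Set.Ioo (-π) π))) := by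
  rw [integrable_prod_iff (FF_meas z)]
  have h1 : ∀ᵐ r : ℝ ∂volume, Complex.abs z ≠ r := by
    rw [ae_iff]
    have he : {r : ℝ | ¬ Complex.abs z ≠ r} = {Complex.abs z} := by
      ext r; simp [eq_comm]
    rw [he]
    exact measure_singleton _
  have hae : ∀ᵐ r ∂(volume.restrict (Set.Ioi (0:ℝ))), 0 < r ∧ Complex.abs z ≠ r := by
    filter_upwards [ae_restrict_mem measurableSet_Ioi, ae_restrict_of_ae h1] with r hr1 hr2
    exact ⟨hr1, hr2⟩
  constructor
  · filter_upwards [hae] with r hr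
    exact FF_integrable_slice z hr.1 hr.2
  · apply Integrable.mono' (integrable_D (12*π*Real.log (1+Complex.abs z)) (12*π)
      (mul_nonneg (by positivity) (Real.log_nonneg (by linarith [Complex.abs.nonneg z])))
      (by positivity))
    · exact (FF_meas z).norm.integral_prod_right'
    · filter_upwards [hae] with r hr
      rw [Real.norm_eq_abs, abs_of_nonneg (integral_nonneg (fun θ => norm_nonneg _))]
      exact FF_norm_inner_le z hr.1 hr.2

end MainAssembly

/-- For every `z ∈ ℂ`,
`(1/π) ∫_ℂ log |z - ζ|² / (1 + |ζ|²)² dA(ζ) = log (1 + |z|²)`,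
where `dA` is Lebesgue measure on `ℂ`. -/
theorem fubini_study_log_potential_identity (z : ℂ) :
    (1 / π) * ∫ ζ : ℂ, Real.log (‖z - ζ‖ ^ 2) / (1 + ‖ζ‖ ^ 2) ^ 2 ∂volume
      = Real.log (1 + ‖z‖ ^ 2) := by
  simp only [Complex.norm_eq_abs]
  have habs0 : 0 ≤ Complex.abs z := Complex.abs.nonneg z
  have h1 : ∀ᵐ r : ℝ ∂volume, Complex.abs z ≠ r := by
    rw [ae_iff]
    have he : {r : ℝ | ¬ Complex.abs z ≠ r} = {Complex.abs z} := by
      ext r; simp [eq_comm]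
    rw [he]
    exact measure_singleton _
  have step1 : (∫ ζ : ℂ, Real.log (Complex.abs (z - ζ) ^ 2) / (1 + Complex.abs ζ ^ 2) ^ 2 ∂volume)
      = ∫ p in Set.Ioi (0:ℝ) ×ˢ Set.Ioo (-π) π, FF z p := by
    rw [← Complex.integral_comp_polarCoord_symm
      (fun ζ => Real.log (Complex.abs (z - ζ) ^ 2) / (1 + Complex.abs ζ ^ 2) ^ 2),
      polarCoord_target]
    apply setIntegral_congr_fun (measurableSet_Ioi.prod measurableSet_Ioo)
    intro p hp
    have hp1 : 0 < p.1 := hp.1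
    dsimp only
    rw [smul_eq_mul, FF, pcs_eq_polar]
    have habs2 : Complex.abs (pcs p) ^ 2 = p.1 ^ 2 := by
      rw [← pcs_eq_polar, Complex.polarCoord_symm_abs, sq_abs]
    rw [habs2]
  have step3 : (∫ p in Set.Ioi (0:ℝ) ×ˢ Set.Ioo (-π) π, FF z p)
      = ∫ r in Set.Ioi (0:ℝ), ∫ θ in Set.Ioo (-π) π, FF z (r, θ) := by
    rw [Measure.volume_eq_prod, ← Measure.prod_restrict, integral_prod _ (FF_prod_integrable z)]
  have step4 : (∫ r in Set.Ioi (0:ℝ), ∫ θ in Set.Ioo (-π) π, FF z (r, θ))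
      = 4*π * ∫ r in Set.Ioi (0:ℝ),
          r * Real.log (max (Complex.abs z) r) / (1+r^2)^2 := by
    rw [← MeasureTheory.integral_const_mul]
    apply setIntegral_congr_ae measurableSet_Ioi
    filter_upwards [h1] with r hner hrpos
    rw [FF_inner_integral z hrpos hner]
  rw [step1, step3, step4, radial_total (Complex.abs z) habs0]
  have hpi := Real.pi_pos
  field_simp
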